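/- Let (Ω, 𝔉, P) be a probability space, let X be a real-valued random variable, and let p > 1 with Hölder conjugate p' = p/(p-1). If 0 < (E[|X|^p])^{1/p} < ∞, then the supremum, over all probability measures Q on (Ω, 𝔉) that are absolutely continuous with respect to P, of E_P[(dQ/dP)^{1/p'} · |X|] equals (E[|X|^p])^{1/p}, and the supremum is attained. -/

import Mathlib

open MeasureTheory
open scoped ENNReal

lemma aux_memℒp_of_integrable_rpow {Ω : Type*} [MeasurableSpace Ω] {P : Measure Ω}
    {q : ℝ} (hq : 0 < q) {F : Ω → ℝ} (hF : AEStronglyMeasurable F P) (hFnn : ∀ ω, 0 ≤ F ω)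
    (hint : Integrable (fun ω => F ω ^ q) P) : MemLp F (ENNReal.ofReal q) P := by
  have A : ENNReal.ofReal q ≠ 0 := by
    rwa [Ne, ENNReal.ofReal_eq_zero, not_le]
  have B : ENNReal.ofReal q ≠ ∞ := ENNReal.ofReal_ne_top
  rw [← memLp_norm_rpow_iff hF A B, ENNReal.toReal_ofReal hq.le,
    ENNReal.div_self A B, memLp_one_iff_integrable]
  refine hint.congr ?_
  filter_upwards with ω
  rw [Real.norm_eq_abs, abs_of_nonneg (hFnn ω)]

/-- Variational formula for the `p`-norm (Theorem 2 of the paper): for a real random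
variable `X` on a probability space `(Ω, P)` and `p > 1` with Hölder conjugate
`p' = p/(p−1)`, if `0 < (E[|X|^p])^{1/p} < ∞` then the supremum, over all probability
measures `Q ≪ P`, of `E_P[(dQ/dP)^{1/p'}·|X|]` equals `(E[|X|^p])^{1/p}`, and it is
attained. -/
theorem stmt_0 {Ω : Type*} [MeasurableSpace Ω] (P : Measure Ω) [IsProbabilityMeasure P]
    (X : Ω → ℝ) (hX : Measurable X) (p : ℝ) (hp : 1 < p)
    (hpos : 0 < ∫ ω, |X ω| ^ p ∂P)
    (hfin : Integrable (fun ω => |X ω| ^ p) P) :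
    IsGreatest
      {r : ℝ | ∃ Q : Measure Ω, IsProbabilityMeasure Q ∧ Q ≪ P ∧
        r = ∫ ω, (Q.rnDeriv P ω).toReal ^ (1 / (p / (p - 1))) * |X ω| ∂P}
      ((∫ ω, |X ω| ^ p ∂P) ^ (1 / p)) := by
  have hp0 : 0 < p := lt_trans one_pos hp
  have hpm1 : 0 < p - 1 := sub_pos.2 hp
  have hpq : p.HolderConjugate (p / (p - 1)) := Real.HolderConjugate.conjExponent hp
  have hq0 : 0 < p / (p - 1) := hpq.symm.pos
  have hexp : 1 / (p / (p - 1)) = (p - 1) / p := one_div_div _ _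
  have hexp2 : (p - 1) / p * (p / (p - 1)) = 1 := by field_simp
  set c := ∫ ω, |X ω| ^ p ∂P with hc_def
  have hc : 0 < c := hpos
  have hexp3 : 1 - (p - 1) / p = 1 / p := by field_simp; ring
  constructor
  · -- attained by Q with density |X|^p / c
    set g : Ω → ℝ≥0∞ := fun ω => ENNReal.ofReal (|X ω| ^ p / c) with hg_def
    have hgm : Measurable g := by
      apply Measurable.ennreal_ofReal
      fun_prop
    have hlint : ∫⁻ ω, g ω ∂P = 1 := by
      rw [← ofReal_integral_eq_lintegral_ofReal (hfin.div_const c)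
        (Filter.Eventually.of_forall fun ω => by positivity)]
      rw [integral_div, ← hc_def, div_self hc.ne', ENNReal.ofReal_one]
    have hQprob : IsProbabilityMeasure (P.withDensity g) := by
      constructor
      rw [withDensity_apply _ MeasurableSet.univ, setLIntegral_univ, hlint]
    refine ⟨P.withDensity g, hQprob, withDensity_absolutelyContinuous _ _, ?_⟩
    have hrn : (P.withDensity g).rnDeriv P =ᵐ[P] g := Measure.rnDeriv_withDensity P hgm
    have h1 : ∫ ω, ((P.withDensity g).rnDeriv P ω).toReal ^ (1 / (p / (p - 1))) * |X ω| ∂P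
        = ∫ ω, |X ω| ^ p / c ^ ((p - 1) / p) ∂P := by
      refine integral_congr_ae ?_
      filter_upwards [hrn] with ω hω
      rw [hω, hexp, hg_def]
      have hXnn : (0:ℝ) ≤ |X ω| := abs_nonneg _
      rw [ENNReal.toReal_ofReal (by positivity),
        Real.div_rpow (by positivity) hc.le]
      rcases eq_or_lt_of_le hXnn with h0 | h0
      · rw [← h0, Real.zero_rpow hp0.ne',
          Real.zero_rpow (by positivity : ((p:ℝ) - 1) / p ≠ 0)]
        simp
      · rw [← Real.rpow_mul hXnn]
        have he : p * ((p - 1) / p) = p - 1 := by field_simp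
        rw [he, div_mul_eq_mul_div]
        congr 1
        nth_rewrite 2 [← Real.rpow_one |X ω|]
        rw [← Real.rpow_add h0, sub_add_cancel]
    rw [h1, integral_div, ← hc_def]
    rw [eq_div_iff (by positivity : c ^ ((p - 1) / p) ≠ 0), ← Real.rpow_add hc,
      show 1 / p + (p - 1) / p = 1 from by field_simp; ring, Real.rpow_one]
  · rintro r ⟨Q, hQprob, hQP, rfl⟩
    set f : Ω → ℝ := fun ω => (Q.rnDeriv P ω).toReal with hf_def
    have hfm : Measurable f := (Q.measurable_rnDeriv P).ennreal_toReal
    have hfint : Integrable f P := Measure.integrable_toReal_rnDeriv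
    have hfint1 : ∫ ω, f ω ∂P = 1 := by
      rw [hf_def, Measure.integral_toReal_rnDeriv hQP]; simp
    have hFq : ∀ ω, (f ω ^ ((p - 1) / p)) ^ (p / (p - 1)) = f ω := fun ω => by
      rw [← Real.rpow_mul ENNReal.toReal_nonneg, hexp2, Real.rpow_one]
    have hF : MemLp (fun ω => f ω ^ ((p - 1) / p)) (ENNReal.ofReal (p / (p - 1))) P := by
      refine aux_memℒp_of_integrable_rpow hq0 ?_
        (fun ω => Real.rpow_nonneg ENNReal.toReal_nonneg _)
        (hfint.congr (Filter.Eventually.of_forall fun ω => (hFq ω).symm))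
      exact (by fun_prop : Measurable fun ω => f ω ^ ((p - 1) / p)).aestronglyMeasurable
    have hXmem : MemLp (fun ω => |X ω|) (ENNReal.ofReal p) P :=
      aux_memℒp_of_integrable_rpow hp0 hX.abs.aestronglyMeasurable (fun ω => abs_nonneg _) hfin
    have hHolder := integral_mul_le_Lp_mul_Lq_of_nonneg (μ := P) hpq.symm
      (f := fun ω => f ω ^ ((p - 1) / p)) (g := fun ω => |X ω|)
      (Filter.Eventually.of_forall fun ω => Real.rpow_nonneg ENNReal.toReal_nonneg _)
      (Filter.Eventually.of_forall fun ω => abs_nonneg _) hF hXmem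
    simp only [hFq] at hHolder
    rw [hfint1, Real.one_rpow, one_mul] at hHolder
    calc ∫ ω, f ω ^ (1 / (p / (p - 1))) * |X ω| ∂P
        = ∫ ω, f ω ^ ((p - 1) / p) * |X ω| ∂P := by rw [hexp]
      _ ≤ c ^ (1 / p) := hHolder
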